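/- For any string T with RLE size m, the quantity X = Σ_{w ∈ W} |K(w)| satisfies X ≤ 2(2m−3) ∈ O(m), where W is the set of bridges w that are either bridge substrings of T with RLE size 2 or 3, or bridges with |K(w)| ≥ 2. -/

import Mathlib

/-- `w` occurs in `T` iff `w` is a (contiguous) substring, i.e. infix, of `T`. -/
def IsMAW {α : Type*} [DecidableEq α] (w T : List α) : Prop :=
  w ≠ [] ∧ ¬ w <:+: T ∧ ∀ v : List α, v <:+: w → v ≠ w → v <:+: T

/-- RLE size: the number of maximal runs of equal characters. -/
def rleSize {α : Type*} [DecidableEq α] (w : List α) : ℕ :=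
  (w.destutter (· ≠ ·)).length

/-- A bridge: length ≥ 2, first two characters differ, last two characters differ. -/
def IsBridge {α : Type*} (w : List α) : Prop :=
  2 ≤ w.length ∧ w[0]? ≠ w[1]? ∧ w[w.length - 2]? ≠ w[w.length - 1]?

/-- Truncate the first run to exponent 1. -/
def truncHead {α : Type*} [DecidableEq α] : List α → List α
  | [] => []
  | a :: t => a :: t.dropWhile (· == a)

/-- Remove the first run completely. -/
def dropHeadRun {α : Type*} [DecidableEq α] : List α → List α
  | [] => []
  | a :: t => (a :: t).dropWhile (· == a)

/-- Remove the first run and truncate the new first run to exponent 1. -/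
def leftReduce {α : Type*} [DecidableEq α] (w : List α) : List α :=
  truncHead (dropHeadRun w)

/-- `bridgeReduce w = w^{(1)}`: remove the first and last runs and truncate the
new outer runs to exponent 1; the empty string if `R(w) ≤ 2`. -/
def bridgeReduce {α : Type*} [DecidableEq α] (w : List α) : List α :=
  if rleSize w ≤ 2 then [] else (leftReduce ((leftReduce w).reverse)).reverse


instance {α : Type*} [DecidableEq α] : DecidablePred (IsBridge (α := α)) := fun w => by
  unfold IsBridge; infer_instance

/-- Number of occurrences of `w` in `T`. -/
def countOcc {α : Type*} [DecidableEq α] (w T : List α) : ℕ :=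
  ((List.range (T.length + 1)).filter
    (fun i => decide ((T.drop i).take w.length = w ∧ i + w.length ≤ T.length))).length

/-- `K(w)`: the set of bridge substrings `z` of `T` with `z^{(1)} = w`, as a `Finset`. -/
def KFin {α : Type*} [DecidableEq α] (T w : List α) : Finset (List α) :=
  T.sublists.toFinset.filter (fun z => z <:+: T ∧ IsBridge z ∧ bridgeReduce z = w)

/-- `K₊(w) = { z ∈ K(w) : |K(z)| ≥ 2 }`. -/
def KplusFin {α : Type*} [DecidableEq α] (T w : List α) : Finset (List α) :=
  (KFin T w).filter (fun z => 2 ≤ (KFin T z).card)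

/-- `K^{(t)}(w)`: bridge substrings `z` of `T` with `z^{(t)} = w`. -/
def KIter {α : Type*} [DecidableEq α] (T w : List α) (t : ℕ) : Finset (List α) :=
  T.sublists.toFinset.filter (fun z => z <:+: T ∧ IsBridge z ∧ bridgeReduce^[t] z = w)

/-- `K₊^{(t)}(w) = { z ∈ K^{(t)}(w) : |K(z)| ≥ 2 }`. -/
def KplusIter {α : Type*} [DecidableEq α] (T w : List α) (t : ℕ) : Finset (List α) :=
  (KIter T w t).filter (fun z => 2 ≤ (KFin T z).card)

/-- `K(w)` as a set. -/
def KSet {α : Type*} [DecidableEq α] (T w : List α) : Set (List α) :=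
  {z | z <:+: T ∧ IsBridge z ∧ bridgeReduce z = w}

/-- Type-3 MAW: a MAW `a u b` with `R = 3`, `a ≠ u[1]`, `b ≠ u[|u|]`. -/
def IsType3MAW {α : Type*} [DecidableEq α] (w T : List α) : Prop :=
  IsMAW w T ∧ rleSize w = 3 ∧
    ∃ (a b : α) (u : List α), u ≠ [] ∧ w = a :: u ++ [b] ∧
      u.head? ≠ some a ∧ u.getLast? ≠ some b

/-- Type-4 MAW: a MAW `a u b` with `R ≥ 4`, `a ≠ u[1]`, `b ≠ u[|u|]`. -/
def IsType4MAW {α : Type*} [DecidableEq α] (w T : List α) : Prop :=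
  IsMAW w T ∧ 4 ≤ rleSize w ∧
    ∃ (a b : α) (u : List α), u ≠ [] ∧ w = a :: u ++ [b] ∧
      u.head? ≠ some a ∧ u.getLast? ≠ some b

/-- Type-5 MAW: a MAW `a u b` with `R ≥ 2` and `a = u[1]` or `b = u[|u|]`. -/
def IsType5MAW {α : Type*} [DecidableEq α] (w T : List α) : Prop :=
  IsMAW w T ∧ 2 ≤ rleSize w ∧
    ∃ (a b : α) (u : List α), u ≠ [] ∧ w = a :: u ++ [b] ∧
      (u.head? = some a ∨ u.getLast? = some b)

/-- The exponent of the longest maximal run of `a` in `T`. -/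
noncomputable def maxRunLen {α : Type*} [DecidableEq α] (a : α) (T : List α) : ℕ :=
  sSup {q : ℕ | List.replicate q a <:+: T}

/-- `w` occurs in `T` starting at position `k` (0-based). -/
def OccursAt {α : Type*} [DecidableEq α] (w T : List α) (k : ℕ) : Prop :=
  k + w.length ≤ T.length ∧ (T.drop k).take w.length = w

section Aux
set_option linter.unusedSectionVars false
open List
variable {α : Type*} [DecidableEq α]

/-! ### basic RLE lemmas -/

lemma rleSize_nil : rleSize ([] : List α) = 0 := rfl

lemma rleSize_pos {w : List α} (h : w ≠ []) : 1 ≤ rleSize w := by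
  obtain ⟨a, t, rfl⟩ := List.exists_cons_of_ne_nil h
  unfold rleSize
  induction t generalizing a with
  | nil => simp [List.destutter]
  | cons b t ih =>
    rw [List.destutter_cons_cons]
    by_cases hab : a ≠ b
    · simp [hab]
    · push_neg at hab
      subst hab
      simpa [List.destutter_cons'] using ih a

lemma rleSize_eq_zero {w : List α} (h : rleSize w = 0) : w = [] := by
  by_contra hne
  have := rleSize_pos (w := w) hne
  omega

lemma takeWhile_all_append {p : α → Bool} {l₁ l₂ : List α} (h : ∀ x ∈ l₁, p x) :
    (l₁ ++ l₂).takeWhile p = l₁ ++ l₂.takeWhile p := by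
  induction l₁ with
  | nil => simp
  | cons a t ih =>
    have ha : p a := h a (by simp)
    simp [List.takeWhile_cons, ha, ih (fun x hx => h x (by simp [hx]))]

lemma dropWhile_all_append {p : α → Bool} {l₁ l₂ : List α} (h : ∀ x ∈ l₁, p x) :
    (l₁ ++ l₂).dropWhile p = l₂.dropWhile p := by
  induction l₁ with
  | nil => simp
  | cons a t ih =>
    have ha : p a := h a (by simp)
    simp only [List.cons_append, List.dropWhile_cons, ha]
    exact ih (fun x hx => h x (by simp [hx]))

lemma dropWhile_head_not {p : α → Bool} {l : List α} (h : ∀ a, l.head? = some a → ¬ p a) :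
    l.dropWhile p = l := by
  cases l with
  | nil => simp
  | cons a t =>
    have := h a rfl
    simp [List.dropWhile_cons, this]

/-- run decomposition of a nonempty list -/
lemma run_decomp {w : List α} (h : w ≠ []) :
    ∃ (a : α) (k : ℕ) (t : List α), w = List.replicate (k+1) a ++ t ∧ t.head? ≠ some a := by
  obtain ⟨a, s, rfl⟩ := List.exists_cons_of_ne_nil h
  set t := s.dropWhile (· == a) with ht
  have hsplit : s.takeWhile (· == a) ++ t = s := List.takeWhile_append_dropWhile ..
  have hrep : s.takeWhile (· == a) = List.replicate (s.takeWhile (· == a)).length a := by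
    apply List.eq_replicate_of_mem
    intro b hb
    simpa using List.mem_takeWhile_imp hb
  refine ⟨a, (s.takeWhile (· == a)).length, t, ?_, ?_⟩
  · rw [List.replicate_succ]
    simp only [List.cons_append]
    rw [← hrep, hsplit]
  · intro hhead
    cases htt : t with
    | nil => simp [htt] at hhead
    | cons b r =>
      rw [htt] at hhead
      simp only [List.head?_cons, Option.some_inj] at hhead
      have : ¬ (b == a) = true := by
        have := List.head?_dropWhile_not (· == a) s
        rw [← ht, htt] at this
        simpa using this
      simp [hhead] at this

lemma rleSize_run_cons {a : α} {k : ℕ} {t : List α} (h : t.head? ≠ some a) :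
    rleSize (List.replicate (k+1) a ++ t) = rleSize t + 1 := by
  induction k with
  | zero =>
    cases t with
    | nil => simp [rleSize, List.destutter]
    | cons b r =>
      have hab : a ≠ b := by
        intro hh; apply h; simp [hh]
      unfold rleSize
      simp only [List.replicate, List.singleton_append]
      rw [List.destutter_cons_cons _ _ , if_pos hab]
      rfl
  | succ k ih =>
    have : List.replicate (k+1+1) a ++ t = a :: (List.replicate (k+1) a ++ t) := by
      simp [List.replicate_succ]
    rw [this]
    have h2 : List.replicate (k+1) a ++ t = a :: (List.replicate k a ++ t) := by
      simp [List.replicate_succ]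
    rw [h2]
    unfold rleSize
    rw [List.destutter_cons_cons, if_neg (by simp)]
    rw [h2] at ih
    unfold rleSize at ih
    convert ih using 2
    rfl

lemma rleSize_cons_ne {a : α} {t : List α} (h : t.head? ≠ some a) :
    rleSize (a :: t) = rleSize t + 1 := by
  have := rleSize_run_cons (a := a) (k := 0) (t := t) h
  simpa using this

lemma rleSize_le_length (w : List α) : rleSize w ≤ w.length :=
  (List.destutter_sublist _ _).length_le

end Aux

section Aux2
set_option linter.unusedSectionVars false
open List
variable {α : Type*} [DecidableEq α]

lemma rleSize_run_concat {a : α} {k : ℕ} {t : List α} (h : t.getLast? ≠ some a) :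
    rleSize (t ++ List.replicate (k+1) a) = rleSize t + 1 := by
  suffices H : ∀ n (t : List α), t.length = n → t.getLast? ≠ some a →
      rleSize (t ++ List.replicate (k+1) a) = rleSize t + 1 from H _ t rfl h
  clear h t
  intro n
  induction n using Nat.strong_induction_on with
  | _ n ih =>
  intro t ht h
  cases t with
  | nil => simpa using rleSize_run_cons (a := a) (k := k) (t := ([]:List α)) (by simp)
  | cons x s =>
    cases s with
    | nil =>
      have hxa : x ≠ a := by simpa using h
      have : (([x] : List α) ++ List.replicate (k+1) a) = x :: (List.replicate (k+1) a) := by simp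
      rw [this, rleSize_cons_ne (t := List.replicate (k+1) a) (by
        cases k with
        | zero => simpa using hxa.symm
        | succ k => simp [List.replicate_succ]; exact fun hh => hxa hh.symm)]
      have hrep1 : rleSize (List.replicate (k+1) a) = 1 := by
        simpa [rleSize_nil] using rleSize_run_cons (a := a) (k := k) (t := ([] : List α)) (by simp)
      have hx1 : rleSize [x] = 1 := by
        simpa [rleSize_nil] using rleSize_run_cons (a := x) (k := 0) (t := ([] : List α)) (by simp)
      rw [hrep1, hx1]
    | cons y r =>
      have hlast : (y :: r).getLast? ≠ some a := by
        rwa [List.getLast?_cons_cons] at h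
      have hlen : (y :: r).length < n := by rw [← ht]; simp
      by_cases hxy : x ≠ y
      · have e1 : rleSize ((x :: y :: r) ++ List.replicate (k+1) a)
            = rleSize ((y :: r) ++ List.replicate (k+1) a) + 1 := by
          unfold rleSize
          simp only [List.cons_append]
          rw [List.destutter_cons_cons, if_pos hxy]
          rfl
        have e2 : rleSize (x :: y :: r) = rleSize (y :: r) + 1 := by
          unfold rleSize
          rw [List.destutter_cons_cons, if_pos hxy]
          rfl
        rw [e1, e2, ih _ hlen _ rfl hlast]
      · push_neg at hxy
        subst hxy
        have e1 : rleSize ((x :: x :: r) ++ List.replicate (k+1) a)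
            = rleSize ((x :: r) ++ List.replicate (k+1) a) := by
          unfold rleSize
          simp only [List.cons_append]
          rw [List.destutter_cons_cons, if_neg (by simp)]
          rfl
        have e2 : rleSize (x :: x :: r) = rleSize (x :: r) := by
          unfold rleSize
          rw [List.destutter_cons_cons, if_neg (by simp)]
          rfl
        have hlast2 : (x :: r).getLast? ≠ some a := by
          cases r with
          | nil => simpa using h
          | cons z rr =>
            rw [List.getLast?_cons_cons] at h ⊢
            exact h
        have hlen2 : (x :: r).length < n := by rw [← ht]; simp
        rw [e1, e2, ih _ hlen2 _ rfl hlast2]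

lemma rleSize_reverse (w : List α) : rleSize w.reverse = rleSize w := by
  suffices H : ∀ n (w : List α), w.length = n → rleSize w.reverse = rleSize w from H _ w rfl
  clear w
  intro n
  induction n using Nat.strong_induction_on with
  | _ n ih =>
  intro w hn
  rcases eq_or_ne w [] with rfl | hne
  · simp
  obtain ⟨a, k, t, rfl, hh⟩ := run_decomp hne
  have hrev : (List.replicate (k+1) a ++ t).reverse = t.reverse ++ List.replicate (k+1) a := by
    simp [List.reverse_append]
  have hlast : t.reverse.getLast? ≠ some a := by
    rw [List.getLast?_reverse]; exact hh
  have hlen : t.length < n := by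
    simp [List.length_append, List.length_replicate] at hn; omega
  rw [hrev, rleSize_run_concat hlast, rleSize_run_cons hh, ih _ (by simpa using hlen) _ rfl]

/-! ### truncHead / leftReduce structure -/

lemma truncHead_decomp {t : List α} (h : t ≠ []) :
    ∃ (a : α) (e : ℕ) (r : List α), t = List.replicate e a ++ (a :: r)
      ∧ truncHead t = a :: r ∧ r.head? ≠ some a ∧ t.head? = some a := by
  obtain ⟨a, k, s, rfl, hh⟩ := run_decomp h
  refine ⟨a, k, s.dropWhile (· == a), ?_, ?_, ?_, ?_⟩
  · have : s.dropWhile (· == a) = s := by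
      apply dropWhile_head_not
      intro b hb
      simp only [beq_iff_eq]
      intro hba; apply hh; rw [hb, hba]
    rw [this, List.replicate_succ']
    simp
  · have h0 : List.replicate (k+1) a ++ s = a :: (List.replicate k a ++ s) := by
      simp [List.replicate_succ]
    rw [h0]
    rw [show truncHead (a :: (List.replicate k a ++ s))
        = a :: (List.replicate k a ++ s).dropWhile (· == a) from rfl]
    congr 1
    rw [dropWhile_all_append (fun x hx => by simp [List.eq_of_mem_replicate hx])]
  · have : s.dropWhile (· == a) = s := by
      apply dropWhile_head_not
      intro b hb
      simp only [beq_iff_eq]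
      intro hba; apply hh; rw [hb, hba]
    rw [this]; exact hh
  · simp [List.replicate_succ]

lemma truncHead_suffix (t : List α) : truncHead t <:+ t := by
  rcases eq_or_ne t [] with rfl | h
  · simp [truncHead]
  obtain ⟨a, e, r, ht, htr, _, _⟩ := truncHead_decomp h
  rw [htr, ht]
  exact ⟨List.replicate e a, rfl⟩

lemma dropHeadRun_suffix (t : List α) : dropHeadRun t <:+ t := by
  cases t with
  | nil => simp [dropHeadRun]
  | cons a s => exact List.dropWhile_suffix _

lemma leftReduce_suffix (t : List α) : leftReduce t <:+ t :=
  (truncHead_suffix _).trans (dropHeadRun_suffix _)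

lemma dropHeadRun_run {a : α} {k : ℕ} {t : List α} (h : t.head? ≠ some a) :
    dropHeadRun (List.replicate (k+1) a ++ t) = t := by
  have : List.replicate (k+1) a ++ t = a :: (List.replicate k a ++ t) := by
    simp [List.replicate_succ]
  rw [this]
  show (a :: (List.replicate k a ++ t)).dropWhile (· == a) = t
  rw [List.dropWhile_cons, if_pos (by simp)]
  rw [dropWhile_all_append (fun x hx => by simp [List.eq_of_mem_replicate hx])]
  apply dropWhile_head_not
  intro b hb
  simp only [beq_iff_eq]
  intro hba; apply h; rw [hb, hba]

lemma rleSize_leftReduce {w : List α} (h : w ≠ []) :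
    rleSize (leftReduce w) + 1 = rleSize w := by
  obtain ⟨a, k, t, rfl, hh⟩ := run_decomp h
  unfold leftReduce
  rw [dropHeadRun_run hh, rleSize_run_cons hh]
  rcases eq_or_ne t [] with rfl | htne
  · simp [truncHead]
  obtain ⟨b, e, r, htd, htr, hr, hbh⟩ := truncHead_decomp htne
  rw [htr, rleSize_cons_ne hr]
  conv_rhs => rw [htd]
  cases e with
  | zero => simp [rleSize_cons_ne hr]
  | succ e =>
    rw [show List.replicate (e+1) b ++ (b :: r) = List.replicate (e+1+1) b ++ r by
      rw [List.replicate_succ' (n := e+1)]; simp]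
    rw [rleSize_run_cons hr]

lemma leftReduce_ne_nil {w : List α} (h : 2 ≤ rleSize w) : leftReduce w ≠ [] := by
  intro hnil
  have hw : w ≠ [] := by rintro rfl; simp [rleSize_nil] at h
  have := rleSize_leftReduce hw
  rw [hnil] at this
  simp [rleSize_nil] at this
  omega

lemma rleSize_bridgeReduce {w : List α} (h : 3 ≤ rleSize w) :
    rleSize (bridgeReduce w) + 2 = rleSize w := by
  have hw : w ≠ [] := by rintro rfl; simp [rleSize_nil] at h
  unfold bridgeReduce
  rw [if_neg (by omega)]
  have h1 : rleSize (leftReduce w) + 1 = rleSize w := rleSize_leftReduce hw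
  have h2 : (leftReduce w).reverse ≠ [] := by
    simp only [ne_eq, List.reverse_eq_nil_iff]
    exact leftReduce_ne_nil (by omega)
  have h3 : rleSize (leftReduce (leftReduce w).reverse) + 1 = rleSize (leftReduce w).reverse :=
    rleSize_leftReduce h2
  have h4 : rleSize ((leftReduce (leftReduce w).reverse).reverse)
      = rleSize (leftReduce (leftReduce w).reverse) := rleSize_reverse _
  rw [h4]
  rw [rleSize_reverse] at h3
  omega

lemma bridgeReduce_nil : bridgeReduce ([] : List α) = [] := by
  simp [bridgeReduce, rleSize_nil]

lemma bridgeReduce_short {w : List α} (h : w.length ≤ 1) : bridgeReduce w = [] := by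
  unfold bridgeReduce
  rw [if_pos (by have := rleSize_le_length w; omega)]

lemma bridgeReduce_infix (w : List α) : bridgeReduce w <:+: w := by
  unfold bridgeReduce
  split
  · exact List.nil_infix
  · have h1 : leftReduce (leftReduce w).reverse <:+ (leftReduce w).reverse :=
      leftReduce_suffix _
    obtain ⟨u, hu⟩ := h1
    have h2 : (leftReduce (leftReduce w).reverse).reverse <+: leftReduce w := by
      refine ⟨u.reverse, ?_⟩
      have h3 := congrArg List.reverse hu
      simpa [List.reverse_append] using h3
    exact h2.isInfix.trans (leftReduce_suffix w).isInfix

lemma leftReduce_length {w : List α} (h : w ≠ []) :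
    (leftReduce w).length + 1 ≤ w.length := by
  obtain ⟨a, k, s, rfl, hh⟩ := run_decomp h
  unfold leftReduce
  rw [dropHeadRun_run hh]
  have := (truncHead_suffix s).length_le
  simp [List.length_append]
  omega

lemma bridgeReduce_length_lt {w : List α} (hw : bridgeReduce w ≠ []) :
    (bridgeReduce w).length < w.length := by
  unfold bridgeReduce at hw ⊢
  split at hw
  · exact absurd rfl hw
  next hcond =>
    rw [if_neg hcond]
    push_neg at hcond
    have hwne : w ≠ [] := by rintro rfl; simp [rleSize_nil] at hcond
    have s1 := leftReduce_length hwne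
    have h2 : (leftReduce w).reverse ≠ [] := by
      simp only [ne_eq, List.reverse_eq_nil_iff]
      exact leftReduce_ne_nil (by omega)
    have s2 := leftReduce_length h2
    simp only [List.length_reverse] at *
    omega

end Aux2

section Aux3
set_option linter.unusedSectionVars false
open List
variable {α : Type*} [DecidableEq α]

lemma bridge_destruct {v : List α} (hv : IsBridge v) :
    ∃ c t, v = c :: t ∧ t ≠ [] ∧ t.head? ≠ some c := by
  obtain ⟨hlen, h01, _⟩ := hv
  match v, hlen with
  | c :: x :: t', _ =>
    refine ⟨c, x :: t', rfl, by simp, ?_⟩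
    simp only [List.getElem?_cons_zero, List.getElem?_cons_succ] at h01
    simp only [List.head?_cons, ne_eq, Option.some_inj]
    intro hh
    exact h01 (by rw [hh])

lemma suffix_getElem_lastTwo {s v : List α} (h : s <:+ v) (h2 : 2 ≤ s.length) :
    s[s.length-2]? = v[v.length-2]? ∧ s[s.length-1]? = v[v.length-1]? := by
  obtain ⟨u, rfl⟩ := h
  have hl : (u ++ s).length = u.length + s.length := by simp
  constructor
  · rw [List.getElem?_append, if_neg (by simp; omega)]
    congr 1
    simp
    omega
  · rw [List.getElem?_append, if_neg (by simp; omega)]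
    congr 1
    simp
    omega

lemma bridgeReduce_eq_of_ne_nil {v : List α} (h : bridgeReduce v ≠ []) :
    bridgeReduce v = (leftReduce ((leftReduce v).reverse)).reverse := by
  by_cases hc : rleSize v ≤ 2
  · exfalso; apply h; unfold bridgeReduce; rw [if_pos hc]
  · unfold bridgeReduce; rw [if_neg hc]

lemma dropHeadRun_cons {c : α} {t : List α} (h : t.head? ≠ some c) :
    dropHeadRun (c :: t) = t := by
  show (c :: t).dropWhile (· == c) = t
  rw [List.dropWhile_cons, if_pos (by simp)]
  apply dropWhile_head_not
  intro b hb
  simp only [beq_iff_eq]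
  intro hbc; apply h; rw [hb, hbc]

/-- Master structure lemma for bridge reduction. -/
lemma master {v z : List α} (hv : IsBridge v) (hred : bridgeReduce v = z)
    (hz2 : 2 ≤ z.length) :
    ∃ (c a b d : α) (e f : ℕ),
      v = c :: (List.replicate e a ++ (z ++ (List.replicate f b ++ [d]))) ∧
      z.head? = some a ∧ z.getLast? = some b ∧ c ≠ a ∧ d ≠ b ∧ IsBridge z := by
  have hzne : z ≠ [] := by intro hh; rw [hh] at hz2; simp at hz2
  have hredne : bridgeReduce v ≠ [] := by rw [hred]; exact hzne
  have hred' : (leftReduce ((leftReduce v).reverse)).reverse = z := by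
    rw [← bridgeReduce_eq_of_ne_nil hredne, hred]
  obtain ⟨c, t, rfl, htne, hthead⟩ := bridge_destruct hv
  -- leftReduce v = truncHead t
  have hLR : leftReduce (c :: t) = truncHead t := by
    unfold leftReduce
    rw [dropHeadRun_cons hthead]
  obtain ⟨a, e, r, htdec, htr, hrhead, hthead2⟩ := truncHead_decomp htne
  set x := truncHead t with hx
  have hca : c ≠ a := by
    intro hh
    apply hthead
    rw [hthead2, hh]
  have hvx : c :: t = c :: (List.replicate e a ++ x) := by
    rw [htr, ← htdec]
  -- z.reverse = leftReduce x.reverse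
  have hzrev : leftReduce x.reverse = z.reverse := by
    rw [← hred', hLR]
    simp
  -- length facts
  have hxlen : 2 ≤ x.length := by
    have h1 : (leftReduce x.reverse).length ≤ x.length := by
      have := (leftReduce_suffix x.reverse).length_le
      simpa using this
    rw [hzrev] at h1
    simpa using le_trans hz2 (by simpa using h1)
  -- x is a suffix of v with length ≥ 2, so last two of x = last two of v
  have hxsuf : x <:+ (c :: t) := by
    have h1 : x <:+ t := by rw [hx]; exact truncHead_suffix t
    exact h1.trans (List.suffix_cons c t)
  have hlast2 := suffix_getElem_lastTwo hxsuf (by omega)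
  have hvlast : (c :: t)[(c :: t).length - 2]? ≠ (c :: t)[(c :: t).length - 1]? := hv.2.2
  have hxlast : x[x.length - 2]? ≠ x[x.length - 1]? := by
    rw [hlast2.1, hlast2.2]; exact hvlast
  -- x.reverse = d :: t₂ with t₂.head? ≠ some d
  have hxrne : x.reverse ≠ [] := by simp; intro hh; rw [hh] at hxlen; simp at hxlen
  obtain ⟨d, t₂, hxrev⟩ := List.exists_cons_of_ne_nil hxrne
  have ht₂len : t₂.length = x.length - 1 := by
    have : x.reverse.length = t₂.length + 1 := by rw [hxrev]; simp
    simp at this; omega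
  have ht₂ne : t₂ ≠ [] := by
    intro hh; rw [hh] at ht₂len; simp at ht₂len; omega
  have hd0 : x.reverse[0]? = some d := by rw [hxrev]; simp
  have hd1 : x.reverse[1]? = t₂.head? := by
    rw [hxrev]
    cases t₂ with
    | nil => simp at ht₂ne
    | cons y s => simp
  have e0 : x.reverse[0]? = x[x.length - 1]? := by
    rw [List.getElem?_reverse (by omega)]
    simp only [Nat.sub_zero]
  have e1 : x.reverse[1]? = x[x.length - 2]? := by
    rw [List.getElem?_reverse (by omega)]
    have h21 : x.length - 1 - 1 = x.length - 2 := by omega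
    rw [h21]
  have ht₂head : t₂.head? ≠ some d := by
    intro hh
    apply hxlast
    rw [← e1, hd1, hh, ← e0, hd0]
  -- leftReduce x.reverse = truncHead t₂
  have hLR2 : leftReduce x.reverse = truncHead t₂ := by
    unfold leftReduce
    rw [hxrev, dropHeadRun_cons ht₂head]
  obtain ⟨b, f, r₂, ht₂dec, ht₂r, hr₂head, ht₂head2⟩ := truncHead_decomp ht₂ne
  have hdb : d ≠ b := by
    intro hh; apply ht₂head; rw [ht₂head2, hh]
  have hbr₂ : (b :: r₂) = z.reverse := by rw [← ht₂r, ← hLR2, hzrev]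
  have hbrz : (b :: r₂).reverse = z := by rw [hbr₂]; simp
  -- x = z ++ replicate f b ++ [d]
  have hxeq : x = z ++ (List.replicate f b ++ [d]) := by
    have hxx : x = x.reverse.reverse := by simp
    rw [hxx, hxrev, ht₂dec, ← hbrz]
    simp [List.reverse_append, List.reverse_replicate]
  -- z.getLast? = some b
  have hzb : z.getLast? = some b := by
    rw [← List.head?_reverse, ← hbr₂]; simp
  -- z.head? = some a
  have hxhead : x.head? = some a := by rw [htr]; rfl
  have hza : z.head? = some a := by
    rw [hxeq] at hxhead
    rwa [List.head?_append_of_ne_nil _ hzne] at hxhead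
  -- IsBridge z
  have hz1 : z[1]? ≠ some a := by
    have hrne : r ≠ [] := by
      intro hh
      rw [htr, hh] at hxlen
      simp at hxlen
    have hx1 : x[1]? = r.head? := by
      rw [htr]
      cases r with
      | nil => simp at hrne
      | cons y s => simp
    have hz1x : z[1]? = x[1]? := by
      rw [hxeq, List.getElem?_append, if_pos (by omega)]
    rw [hz1x, hx1]
    exact hrhead
  have hz0 : z[0]? = some a := by
    rw [← hza, List.head?_eq_getElem?]
  have hzlast1 : z[z.length - 1]? = some b := by
    rw [← List.getLast?_eq_getElem?]; exact hzb
  have hzlast2 : z[z.length - 2]? ≠ some b := by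
    have hlen : z.length = r₂.length + 1 := by rw [← hbrz]; simp
    have hidx0 := List.getElem?_reverse (l := b :: r₂) (i := z.length - 2)
      (by simp only [List.length_cons]; omega)
    rw [hbrz] at hidx0
    have h11 : (b :: r₂).length - 1 - (z.length - 2) = 1 := by
      simp only [List.length_cons]; omega
    rw [h11] at hidx0
    rw [hidx0]
    cases r₂ with
    | nil => rw [hlen] at hz2; simp at hz2
    | cons y s =>
      simpa using hr₂head
  refine ⟨c, a, b, d, e, f, ?_, hza, hzb, hca, hdb, ?_⟩
  · rw [hvx, hxeq]
  · exact ⟨hz2, by rw [hz0]; exact fun hh => hz1 hh.symm, by rw [hzlast1]; exact hzlast2⟩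

end Aux3

section Aux4
set_option linter.unusedSectionVars false
open List
variable {α : Type*} [DecidableEq α]

def occFin (T z : List α) : Finset ℕ :=
  (Finset.range (T.length + 1)).filter
    (fun i => i + z.length ≤ T.length ∧ (T.drop i).take z.length = z)

lemma mem_occFin {T z : List α} {i : ℕ} :
    i ∈ occFin T z ↔ i + z.length ≤ T.length ∧ (T.drop i).take z.length = z := by
  unfold occFin
  simp only [Finset.mem_filter, Finset.mem_range]
  constructor
  · exact fun h => h.2
  · exact fun h => ⟨by omega, h⟩

lemma occ_get {T z : List α} {i : ℕ} (h : i ∈ occFin T z) {k : ℕ} (hk : k < z.length) :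
    T[i+k]? = z[k]? := by
  rw [mem_occFin] at h
  conv_rhs => rw [← h.2]
  rw [List.getElem?_take, if_pos hk, List.getElem?_drop]

lemma occFin_nonempty {T z : List α} (h : z <:+: T) : (occFin T z).Nonempty := by
  obtain ⟨s, u, hT⟩ := h
  refine ⟨s.length, ?_⟩
  rw [mem_occFin]
  constructor
  · rw [← hT]; simp [List.length_append]
  · rw [← hT]
    rw [List.append_assoc, List.drop_left, List.take_left]

lemma occFin_card_pos {T z : List α} (h : z <:+: T) : 1 ≤ (occFin T z).card :=
  Finset.card_pos.mpr (occFin_nonempty h)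

lemma occ_sub {T v z p s : List α} (hv : v = p ++ z ++ s) {i : ℕ} (hi : i ∈ occFin T v) :
    (i + p.length) ∈ occFin T z := by
  rw [mem_occFin] at hi ⊢
  obtain ⟨h1, h2⟩ := hi
  have hvl : v.length = p.length + z.length + s.length := by rw [hv]; simp; omega
  constructor
  · omega
  · have hd : T.drop (i + p.length) = (T.drop i).drop p.length := by
      rw [List.drop_drop]
    have hT' : T.drop i = v ++ T.drop (i + v.length) := by
      conv_lhs => rw [← List.take_append_drop v.length (T.drop i)]
      rw [h2, List.drop_drop]
    rw [hd, hT', hv]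
    rw [List.append_assoc, List.append_assoc, List.drop_left, ← List.append_assoc, List.append_assoc]
    exact List.take_left

lemma mem_KFin {T z v : List α} :
    v ∈ KFin T z ↔ v <:+: T ∧ IsBridge v ∧ bridgeReduce v = z := by
  unfold KFin
  simp only [Finset.mem_filter, List.mem_toFinset, List.mem_sublists]
  constructor
  · exact fun h => h.2
  · exact fun h => ⟨h.1.sublist, h⟩

lemma decomp_getElem? {c a b d : α} {e f : ℕ} {z : List α} (v : List α)
    (hv : v = c :: (List.replicate e a ++ (z ++ (List.replicate f b ++ [d])))) :
    v[0]? = some c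
    ∧ (∀ k, k < e → v[k+1]? = some a)
    ∧ (∀ k, k < z.length → v[1 + e + k]? = z[k]?)
    ∧ (∀ k, k < f → v[1 + e + z.length + k]? = some b)
    ∧ v[1 + e + z.length + f]? = some d
    ∧ v.length = e + z.length + f + 2 := by
  subst hv
  refine ⟨by simp, ?_, ?_, ?_, ?_, by simp [List.length_append]; omega⟩
  · intro k hk
    rw [List.getElem?_cons_succ, List.getElem?_append, if_pos (by simpa using hk),
      List.getElem?_replicate, if_pos hk]
  · intro k hk
    have h1 : 1 + e + k = (e + k) + 1 := by omega
    rw [h1, List.getElem?_cons_succ, List.getElem?_append,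
      if_neg (by simp only [List.length_replicate]; omega)]
    have h2 : e + k - (List.replicate e a).length = k := by simp
    rw [h2, List.getElem?_append, if_pos hk]
  · intro k hk
    have h1 : 1 + e + z.length + k = (e + (z.length + k)) + 1 := by omega
    rw [h1, List.getElem?_cons_succ, List.getElem?_append,
      if_neg (by simp only [List.length_replicate]; omega)]
    have h2 : e + (z.length + k) - (List.replicate e a).length = z.length + k := by simp
    rw [h2, List.getElem?_append, if_neg (by omega)]
    have h3 : z.length + k - z.length = k := by omega
    rw [h3, List.getElem?_append, if_pos (by simpa using hk), List.getElem?_replicate,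
      if_pos hk]
  · have h1 : 1 + e + z.length + f = (e + (z.length + f)) + 1 := by omega
    rw [h1, List.getElem?_cons_succ, List.getElem?_append,
      if_neg (by simp only [List.length_replicate]; omega)]
    have h2 : e + (z.length + f) - (List.replicate e a).length = z.length + f := by simp
    rw [h2, List.getElem?_append, if_neg (by omega)]
    have h3 : z.length + f - z.length = f := by omega
    rw [h3, List.getElem?_append, if_neg (by simp)]
    have h4 : f - (List.replicate f b).length = 0 := by simp
    rw [h4]
    simp

/-- strengthened master: also identifies `leftReduce v`. -/
lemma master' {v z : List α} (hv : IsBridge v) (hred : bridgeReduce v = z)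
    (hz2 : 2 ≤ z.length) :
    ∃ (c a b d : α) (e f : ℕ),
      v = c :: (List.replicate e a ++ (z ++ (List.replicate f b ++ [d]))) ∧
      z.head? = some a ∧ z.getLast? = some b ∧ c ≠ a ∧ d ≠ b ∧ IsBridge z ∧
      v.length - (leftReduce v).length = e + 1 := by
  obtain ⟨c, a, b, d, e, f, hdec, hza, hzb, hca, hdb, hzbr⟩ := master hv hred hz2
  refine ⟨c, a, b, d, e, f, hdec, hza, hzb, hca, hdb, hzbr, ?_⟩
  -- compute leftReduce v
  have hzne : z ≠ [] := by intro hh; rw [hh] at hz2; simp at hz2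
  obtain ⟨a', ζ, hzcons⟩ := List.exists_cons_of_ne_nil hzne
  have haa : a' = a := by
    have hh := hza; rw [hzcons] at hh; simpa using hh
  rw [haa] at hzcons
  clear haa
  have hta : (List.replicate e a ++ (z ++ (List.replicate f b ++ [d]))).head? ≠ some c := by
    cases e with
    | zero =>
      simp only [List.replicate, List.nil_append]
      rw [List.head?_append_of_ne_nil _ hzne, hza]
      simp only [ne_eq, Option.some_inj]
      exact fun hh => hca hh.symm
    | succ e =>
      rw [List.head?_append_of_ne_nil _ (by simp)]
      simp [List.replicate_succ]
      exact fun hh => hca hh.symm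
  have hLR : leftReduce v = truncHead (List.replicate e a ++ (z ++ (List.replicate f b ++ [d]))) := by
    rw [hdec]
    unfold leftReduce
    rw [dropHeadRun_cons hta]
  -- truncHead of (replicate e a ++ (a :: ζ ++ rest)) = a :: dropWhile (== a) (ζ ++ rest)
  have hz1 : z[1]? ≠ some a := by
    have := hzbr.2.1
    rw [← List.head?_eq_getElem?, hza] at this
    exact fun hh => this hh.symm
  have hform : List.replicate e a ++ (z ++ (List.replicate f b ++ [d]))
      = List.replicate e a ++ (a :: (ζ ++ (List.replicate f b ++ [d]))) := by
    rw [hzcons]; simp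
  have htr : truncHead (List.replicate e a ++ (z ++ (List.replicate f b ++ [d])))
      = a :: (ζ ++ (List.replicate f b ++ [d])).dropWhile (· == a) := by
    rw [hform]
    cases e with
    | zero =>
      simp only [List.replicate, List.nil_append]
      rfl
    | succ e =>
      have : List.replicate (e+1) a ++ (a :: (ζ ++ (List.replicate f b ++ [d])))
          = a :: (List.replicate e a ++ (a :: (ζ ++ (List.replicate f b ++ [d])))) := by
        simp [List.replicate_succ]
      rw [this]
      rw [show truncHead (a :: (List.replicate e a ++ (a :: (ζ ++ (List.replicate f b ++ [d])))))
        = a :: (List.replicate e a ++ (a :: (ζ ++ (List.replicate f b ++ [d])))).dropWhile (· == a) from rfl]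
      congr 1
      rw [dropWhile_all_append (fun x hx => by simp [List.eq_of_mem_replicate hx])]
      rw [List.dropWhile_cons, if_pos (by simp)]
  -- dropWhile (== a) (ζ ++ rest) = ζ ++ rest since head of ζ (or rest) ≠ a
  have hdw : (ζ ++ (List.replicate f b ++ [d])).dropWhile (· == a)
      = ζ ++ (List.replicate f b ++ [d]) := by
    apply dropWhile_head_not
    intro x hx
    simp only [beq_iff_eq]
    intro hxa
    subst hxa
    cases ζ with
    | nil =>
      -- z = [a], contradicts hz2
      rw [hzcons] at hz2; simp at hz2
    | cons y s =>
      apply hz1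
      rw [hzcons]
      simp only [List.getElem?_cons_succ, List.getElem?_cons_zero]
      simpa using hx
  have hlen : v.length = 1 + (e + (z.length + (f + 1))) := by
    rw [hdec]; simp [List.length_append]; omega
  have hLRlen : (leftReduce v).length = z.length + f + 1 := by
    rw [hLR, htr, hdw, hzcons]
    simp [List.length_append]
    omega
  omega

/-- Key counting lemma: occurrences of the children inject into occurrences of the parent. -/
lemma sum_occ_le {T z : List α} (hzb : IsBridge z) :
    ∑ v ∈ KFin T z, (occFin T v).card ≤ (occFin T z).card := by
  classical
  rw [← Finset.card_sigma]
  apply Finset.card_le_card_of_injOn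
    (fun p => p.2 + (p.1.length - (leftReduce p.1).length))
  · rintro ⟨v, i⟩ hp
    rw [Finset.mem_coe, Finset.mem_sigma] at hp
    obtain ⟨hvK, hiO⟩ := hp
    dsimp only at hvK hiO
    rw [mem_KFin] at hvK
    obtain ⟨hvT, hvb, hvred⟩ := hvK
    obtain ⟨c, a, b, d, e, f, hdec, hza, hzb', hca, hdb, _, hsh⟩ :=
      master' hvb hvred hzb.1
    show i + (v.length - (leftReduce v).length) ∈ occFin T z
    rw [hsh]
    have hv' : v = (c :: List.replicate e a) ++ z ++ (List.replicate f b ++ [d]) := by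
      rw [hdec]; simp
    have := occ_sub hv' hiO
    simpa using this
  · rintro ⟨v₁, i₁⟩ hp₁ ⟨v₂, i₂⟩ hp₂ heq
    simp only [Finset.coe_sigma, Set.mem_sigma_iff] at hp₁ hp₂
    obtain ⟨hvK₁, hiO₁⟩ := hp₁
    obtain ⟨hvK₂, hiO₂⟩ := hp₂
    dsimp only at hvK₁ hvK₂ hiO₁ hiO₂ heq
    rw [Finset.mem_coe, mem_KFin] at hvK₁ hvK₂
    obtain ⟨hvT₁, hvb₁, hvred₁⟩ := hvK₁
    obtain ⟨hvT₂, hvb₂, hvred₂⟩ := hvK₂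
    rw [Finset.mem_coe] at hiO₁ hiO₂
    obtain ⟨c₁, a₁, b₁, d₁, e₁, f₁, hdec₁, hza₁, hzb₁, hca₁, hdb₁, _, hsh₁⟩ :=
      master' hvb₁ hvred₁ hzb.1
    obtain ⟨c₂, a₂, b₂, d₂, e₂, f₂, hdec₂, hza₂, hzb₂, hca₂, hdb₂, _, hsh₂⟩ :=
      master' hvb₂ hvred₂ hzb.1
    have haa : a₁ = a₂ := by simpa using hza₁.symm.trans hza₂
    have hbb : b₁ = b₂ := by simpa using hzb₁.symm.trans hzb₂
    subst haa; subst hbb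
    simp only [hsh₁, hsh₂] at heq
    -- heq : i₁ + (e₁ + 1) = i₂ + (e₂ + 1)
    obtain ⟨g01, g1a₁, g1z₁, g1b₁, g1d₁, g1len₁⟩ := decomp_getElem? v₁ hdec₁
    obtain ⟨g02, g1a₂, g1z₂, g1b₂, g1d₂, g1len₂⟩ := decomp_getElem? v₂ hdec₂
    -- e₁ = e₂
    have hee : e₁ = e₂ := by
      by_contra hne
      rcases Nat.lt_or_ge e₁ e₂ with hlt | hge
      · -- T[i₁]? = some c₁ but also = some a₁
        have h1 : T[i₁ + 0]? = some c₁ := by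
          rw [occ_get hiO₁ (by omega), g01]
        have hi12 : i₁ = i₂ + (e₂ - e₁) := by omega
        have h2 : T[i₂ + ((e₂ - e₁ - 1) + 1)]? = some a₁ := by
          rw [occ_get hiO₂ (by omega), g1a₂ _ (by omega)]
        rw [show i₂ + ((e₂ - e₁ - 1) + 1) = i₁ + 0 by omega] at h2
        rw [h1] at h2
        exact hca₁ (by simpa using h2)
      · have hlt : e₂ < e₁ := by omega
        have h1 : T[i₂ + 0]? = some c₂ := by
          rw [occ_get hiO₂ (by omega), g02]
        have h2 : T[i₁ + ((e₁ - e₂ - 1) + 1)]? = some a₁ := by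
          rw [occ_get hiO₁ (by omega), g1a₁ _ (by omega)]
        rw [show i₁ + ((e₁ - e₂ - 1) + 1) = i₂ + 0 by omega] at h2
        rw [h1] at h2
        exact hca₂ (by simpa using h2)
    have hii : i₁ = i₂ := by omega
    subst hii
    subst hee
    have hcc : c₁ = c₂ := by
      have h1 : T[i₁ + 0]? = some c₁ := by rw [occ_get hiO₁ (by omega), g01]
      have h2 : T[i₁ + 0]? = some c₂ := by rw [occ_get hiO₂ (by omega), g02]
      rw [h1] at h2; simpa using h2
    have hff : f₁ = f₂ := by
      by_contra hne
      rcases Nat.lt_or_ge f₁ f₂ with hlt | hge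
      · have h1 : T[i₁ + (1 + e₁ + z.length + f₁)]? = some d₁ := by
          rw [occ_get hiO₁ (by omega), g1d₁]
        have h2 : T[i₁ + (1 + e₁ + z.length + f₁)]? = some b₁ := by
          rw [occ_get hiO₂ (by omega), g1b₂ _ hlt]
        rw [h1] at h2
        exact hdb₁ (by simpa using h2)
      · have hlt : f₂ < f₁ := by omega
        have h1 : T[i₁ + (1 + e₁ + z.length + f₂)]? = some d₂ := by
          rw [occ_get hiO₂ (by omega), g1d₂]
        have h2 : T[i₁ + (1 + e₁ + z.length + f₂)]? = some b₁ := by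
          rw [occ_get hiO₁ (by omega), g1b₁ _ hlt]
        rw [h1] at h2
        exact hdb₂ (by simpa using h2)
    subst hff
    have hdd : d₁ = d₂ := by
      have h1 : T[i₁ + (1 + e₁ + z.length + f₁)]? = some d₁ := by
        rw [occ_get hiO₁ (by omega), g1d₁]
      have h2 : T[i₁ + (1 + e₁ + z.length + f₁)]? = some d₂ := by
        rw [occ_get hiO₂ (by omega), g1d₂]
      rw [h1] at h2; simpa using h2
    have hvv : v₁ = v₂ := by rw [hdec₁, hdec₂, hcc, hdd]
    subst hvv
    rfl

end Aux4

section Aux5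
set_option linter.unusedSectionVars false
open List
variable {α : Type*} [DecidableEq α]

theorem my_sum_biUnion_le {ι κ : Type*} [DecidableEq ι] [DecidableEq κ]
    (s : Finset ι) (t : ι → Finset κ) (f : κ → ℕ) :
    ∑ x ∈ s.biUnion t, f x ≤ ∑ i ∈ s, ∑ x ∈ t i, f x := by
  induction s using Finset.induction_on with
  | empty => simp
  | insert _ _ hnotmem ih =>
    rename_i a s
    rw [Finset.biUnion_insert, Finset.sum_insert hnotmem]
    have h1 : t a ∪ s.biUnion t = t a ∪ (s.biUnion t \ t a) := by
      rw [Finset.union_sdiff_self_eq_union]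
    rw [h1, Finset.sum_union Finset.disjoint_sdiff]
    have h2 : ∑ x ∈ s.biUnion t \ t a, f x ≤ ∑ x ∈ s.biUnion t, f x :=
      Finset.sum_le_sum_of_subset (Finset.sdiff_subset)
    omega

def DescF (T z : List α) : Finset (List α) :=
  T.sublists.toFinset.filter
    (fun u => u <:+: T ∧ IsBridge u ∧ ∃ t, t ≤ T.length ∧ bridgeReduce^[t] u = z)

def hF (T z : List α) : ℕ :=
  ∑ u ∈ (DescF T z).filter (fun u => 2 ≤ (KFin T u).card), (KFin T u).card

lemma mem_DescF {T z u : List α} :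
    u ∈ DescF T z ↔ u <:+: T ∧ IsBridge u ∧ ∃ t, t ≤ T.length ∧ bridgeReduce^[t] u = z := by
  unfold DescF
  simp only [Finset.mem_filter, List.mem_toFinset, List.mem_sublists]
  exact ⟨fun h => h.2, fun h => ⟨h.1.sublist, h⟩⟩

lemma iterate_red_nil (s : ℕ) : bridgeReduce^[s] ([] : List α) = [] :=
  Function.iterate_fixed bridgeReduce_nil s

lemma K_length {T z v : List α} (hz : IsBridge z) (hv : v ∈ KFin T z) :
    z.length + 2 ≤ v.length := by
  obtain ⟨hvT, hvb, hred⟩ := mem_KFin.mp hv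
  obtain ⟨c, a, b, d, e, f, hdec, -⟩ := master hvb hred hz.1
  rw [hdec]
  simp [List.length_append]
  omega

lemma chain_bridge {w z : List α} (hw : IsBridge w) (hz : IsBridge z) {m : ℕ}
    (h : bridgeReduce^[m] w = z) (hm : 1 ≤ m) :
    IsBridge (bridgeReduce w) ∧ bridgeReduce w <:+: w := by
  have hz2 : 2 ≤ z.length := hz.1
  have hne : bridgeReduce w ≠ [] := by
    intro hnil
    have : bridgeReduce^[m] w = [] := by
      rw [show m = (m - 1) + 1 by omega, Function.iterate_succ_apply, hnil, iterate_red_nil]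
    rw [h] at this
    rw [this] at hz2
    simp at hz2
  have hlen2 : 2 ≤ (bridgeReduce w).length := by
    by_contra hlt
    push_neg at hlt
    rcases Nat.lt_or_ge m 2 with hm1 | hm2
    · -- m = 1 : z = bridgeReduce w, so 2 ≤ length, contra
      have hm1' : m = 1 := by omega
      rw [hm1'] at h
      simp only [Function.iterate_one] at h
      rw [h] at hlt
      omega
    · have hzero : bridgeReduce (bridgeReduce w) = [] := bridgeReduce_short (by omega)
      have : bridgeReduce^[m] w = [] := by
        rw [show m = (m - 2) + 1 + 1 by omega, Function.iterate_succ_apply,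
          Function.iterate_succ_apply, hzero, iterate_red_nil]
      rw [h] at this
      rw [this] at hz2
      simp at hz2
  obtain ⟨-, -, -, -, -, -, -, -, -, -, -, hbr⟩ := master hw rfl hlen2
  exact ⟨hbr, bridgeReduce_infix w⟩

lemma chain_all {T u z : List α} (hu : IsBridge u) (huT : u <:+: T) (hz : IsBridge z) :
    ∀ t s, s ≤ t → bridgeReduce^[t] u = z →
      IsBridge (bridgeReduce^[s] u) ∧ bridgeReduce^[s] u <:+: T := by
  intro t s
  induction s with
  | zero => intro _ _; exact ⟨hu, huT⟩
  | succ s ih =>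
    intro hst hred
    obtain ⟨hb, hT⟩ := ih (by omega) hred
    have h1 : bridgeReduce^[t - s] (bridgeReduce^[s] u) = z := by
      rw [← Function.iterate_add_apply, show t - s + s = t by omega]
      exact hred
    have h2 := chain_bridge hb hz h1 (by omega)
    rw [Function.iterate_succ_apply']
    exact ⟨h2.1, h2.2.trans hT⟩

lemma desc_cover {T z : List α} (hz : IsBridge z) {u : List α}
    (hu : u ∈ DescF T z) (hne : u ≠ z) :
    ∃ v, v ∈ KFin T z ∧ u ∈ DescF T v := by
  rw [mem_DescF] at hu
  obtain ⟨huT, hub, t, htn, hred⟩ := hu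
  cases t with
  | zero => simp at hred; exact absurd hred hne
  | succ t =>
    have hall := chain_all hub huT hz (t+1) t (by omega) hred
    refine ⟨bridgeReduce^[t] u, ?_, ?_⟩
    · rw [mem_KFin]
      refine ⟨hall.2, hall.1, ?_⟩
      rw [Function.iterate_succ_apply'] at hred
      exact hred
    · rw [mem_DescF]
      exact ⟨huT, hub, t, by omega, rfl⟩

lemma hF_le {T z : List α} (hz : IsBridge z) :
    hF T z ≤ (if 2 ≤ (KFin T z).card then (KFin T z).card else 0)
      + ∑ v ∈ KFin T z, hF T v := by
  classical
  set D := (DescF T z).filter (fun u => 2 ≤ (KFin T u).card) with hD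
  have hsub : D.erase z ⊆ (KFin T z).biUnion
      (fun v => (DescF T v).filter (fun u => 2 ≤ (KFin T u).card)) := by
    intro u hu
    rw [Finset.mem_erase] at hu
    obtain ⟨hune, hu⟩ := hu
    rw [hD, Finset.mem_filter] at hu
    obtain ⟨v, hvK, hvD⟩ := desc_cover hz hu.1 hune
    rw [Finset.mem_biUnion]
    exact ⟨v, hvK, Finset.mem_filter.mpr ⟨hvD, hu.2⟩⟩
  have hrest : ∑ u ∈ D.erase z, (KFin T u).card ≤ ∑ v ∈ KFin T z, hF T v := by
    calc ∑ u ∈ D.erase z, (KFin T u).card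
        ≤ ∑ u ∈ (KFin T z).biUnion
            (fun v => (DescF T v).filter (fun u => 2 ≤ (KFin T u).card)),
            (KFin T u).card := Finset.sum_le_sum_of_subset hsub
      _ ≤ ∑ v ∈ KFin T z, ∑ u ∈ (DescF T v).filter (fun u => 2 ≤ (KFin T u).card),
            (KFin T u).card := my_sum_biUnion_le ..
      _ = ∑ v ∈ KFin T z, hF T v := rfl
  have hFd : hF T z = ∑ u ∈ D, (KFin T u).card := by rw [hD]; rfl
  by_cases hzD : z ∈ D
  · have heq := Finset.add_sum_erase D (fun u => (KFin T u).card) hzD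
    have hbig : 2 ≤ (KFin T z).card := (Finset.mem_filter.mp hzD).2
    rw [if_pos hbig]
    omega
  · have heq : ∑ u ∈ D.erase z, (KFin T u).card = ∑ u ∈ D, (KFin T u).card := by
      rw [Finset.erase_eq_of_notMem hzD]
    have hif : 0 ≤ (if 2 ≤ (KFin T z).card then (KFin T z).card else 0) := Nat.zero_le _
    omega

lemma hF_bound {T : List α} :
    ∀ fuel (z : List α), IsBridge z → z <:+: T → T.length ≤ z.length + fuel →
      hF T z + 2 ≤ 2 * (occFin T z).card := by
  intro fuel
  induction fuel with
  | zero =>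
    intro z hz hzT hlen
    have hK : KFin T z = ∅ := by
      rw [Finset.eq_empty_iff_forall_notMem]
      intro v hv
      have h1 := K_length hz hv
      have h2 := (mem_KFin.mp hv).1.length_le
      omega
    have hrec := hF_le (T := T) hz
    rw [hK] at hrec
    simp at hrec
    have hO := occFin_card_pos hzT
    omega
  | succ fuel ih =>
    intro z hz hzT hlen
    have hrec := hF_le (T := T) hz
    have hchild : ∀ v ∈ KFin T z, hF T v + 2 ≤ 2 * (occFin T v).card := by
      intro v hv
      have hm := mem_KFin.mp hv
      have hlv := K_length hz hv
      exact ih v hm.2.1 hm.1 (by omega)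
    have hsum : (∑ v ∈ KFin T z, hF T v) + 2 * (KFin T z).card
        ≤ 2 * (occFin T z).card := by
      calc (∑ v ∈ KFin T z, hF T v) + 2 * (KFin T z).card
          = ∑ v ∈ KFin T z, (hF T v + 2) := by
            rw [Finset.sum_add_distrib, Finset.sum_const, smul_eq_mul]
            ring
        _ ≤ ∑ v ∈ KFin T z, 2 * (occFin T v).card := Finset.sum_le_sum hchild
        _ = 2 * ∑ v ∈ KFin T z, (occFin T v).card := (Finset.mul_sum ..).symm
        _ ≤ 2 * (occFin T z).card := Nat.mul_le_mul_left _ (sum_occ_le hz)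
    by_cases hc : 2 ≤ (KFin T z).card
    · rw [if_pos hc] at hrec
      omega
    · rw [if_neg hc] at hrec
      rcases Nat.eq_zero_or_pos (KFin T z).card with h0 | h1
      · have hKe : KFin T z = ∅ := Finset.card_eq_zero.mp h0
        rw [hKe] at hrec
        simp at hrec
        have hO := occFin_card_pos hzT
        omega
      · omega

lemma root_bound {T z : List α} (hz : IsBridge z) (hzT : z <:+: T) :
    (KFin T z).card + hF T z ≤ 2 * (occFin T z).card := by
  have hrec := hF_le (T := T) hz
  have hchild : ∀ v ∈ KFin T z, hF T v + 2 ≤ 2 * (occFin T v).card := by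
    intro v hv
    have hm := mem_KFin.mp hv
    exact hF_bound T.length v hm.2.1 hm.1 (Nat.le_add_left _ _)
  have hsum : (∑ v ∈ KFin T z, hF T v) + 2 * (KFin T z).card
      ≤ 2 * (occFin T z).card := by
    calc (∑ v ∈ KFin T z, hF T v) + 2 * (KFin T z).card
        = ∑ v ∈ KFin T z, (hF T v + 2) := by
          rw [Finset.sum_add_distrib, Finset.sum_const, smul_eq_mul]
          ring
      _ ≤ ∑ v ∈ KFin T z, 2 * (occFin T v).card := Finset.sum_le_sum hchild
      _ = 2 * ∑ v ∈ KFin T z, (occFin T v).card := (Finset.mul_sum ..).symm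
      _ ≤ 2 * (occFin T z).card := Nat.mul_le_mul_left _ (sum_occ_le hz)
  have hif : (if 2 ≤ (KFin T z).card then (KFin T z).card else 0) ≤ (KFin T z).card := by
    split <;> omega
  omega

end Aux5

section Aux6
set_option linter.unusedSectionVars false
open List
variable {α : Type*} [DecidableEq α]

def bdFin (T : List α) : Finset ℕ :=
  (Finset.range T.length).filter (fun j => j + 1 < T.length ∧ T[j]? ≠ T[j+1]?)

lemma mem_bdFin {T : List α} {j : ℕ} :
    j ∈ bdFin T ↔ j + 1 < T.length ∧ T[j]? ≠ T[j+1]? := by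
  unfold bdFin
  simp only [Finset.mem_filter, Finset.mem_range]
  exact ⟨fun h => h.2, fun h => ⟨by omega, h⟩⟩

lemma bdFin_cons (a : α) (l : List α) :
    bdFin (a :: l) = (if ((a :: l)[0]? ≠ (a :: l)[1]? ∧ 1 < (a :: l).length)
      then ({0} : Finset ℕ) else ∅) ∪ (bdFin l).image (· + 1) := by
  ext j
  rw [mem_bdFin, Finset.mem_union, Finset.mem_image]
  rcases j with _ | j
  · constructor
    · intro h
      left
      rw [if_pos ⟨h.2, by simpa using h.1⟩]
      simp
    · intro h
      rcases h with h | h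
      · split at h
        · rename_i hcond
          exact ⟨by simpa using hcond.2, hcond.1⟩
        · simp at h
      · obtain ⟨x, _, hx⟩ := h
        omega
  · constructor
    · intro h
      right
      refine ⟨j, ?_, by omega⟩
      rw [mem_bdFin]
      constructor
      · have := h.1; simpa using this
      · have := h.2
        simpa using this
    · intro h
      rcases h with h | h
      · split at h <;> simp at h
      · obtain ⟨x, hx, hxe⟩ := h
        have hxj : x = j := by omega
        subst hxj
        rw [mem_bdFin] at hx
        exact ⟨by simpa using hx.1, by simpa using hx.2⟩

lemma bdFin_card : ∀ (T : List α), T ≠ [] → (bdFin T).card + 1 = rleSize T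
  | [], h => absurd rfl h
  | [a], _ => by
    have : bdFin [a] = ∅ := by
      ext j; rw [mem_bdFin]; simp
    rw [this]
    simp [rleSize, List.destutter]
  | a :: b :: t, _ => by
    rw [bdFin_cons]
    have hinj : Function.Injective (· + 1 : ℕ → ℕ) := add_left_injective 1
    have hcard2 : ((bdFin (b :: t)).image (· + 1)).card = (bdFin (b :: t)).card :=
      Finset.card_image_of_injective _ hinj
    have hIH := bdFin_card (b :: t) (by simp)
    by_cases hab : a ≠ b
    · rw [if_pos ⟨by simpa using hab, by simp⟩]
      have hdisj : Disjoint ({0} : Finset ℕ) ((bdFin (b :: t)).image (· + 1)) := by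
        rw [Finset.disjoint_left]
        intro x hx
        simp at hx
        subst hx
        rw [Finset.mem_image]
        rintro ⟨y, _, hy⟩
        simp at hy
      rw [Finset.card_union_of_disjoint hdisj, hcard2]
      have hrle : rleSize (a :: b :: t) = rleSize (b :: t) + 1 := by
        unfold rleSize
        rw [List.destutter_cons_cons, if_pos hab]
        rfl
      simp only [Finset.card_singleton]
      omega
    · push_neg at hab
      subst hab
      rw [if_neg (by simp)]
      simp only [Finset.empty_union]
      rw [hcard2]
      have hrle : rleSize (a :: a :: t) = rleSize (a :: t) := by
        unfold rleSize
        rw [List.destutter_cons_cons, if_neg (by simp)]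
        rfl
      omega

lemma bridge_first_run {w t : List α} {a : α} {k : ℕ} (hb : IsBridge w)
    (hd : w = List.replicate (k+1) a ++ t) : k = 0 := by
  by_contra hk
  have h0 : w[0]? = some a := by
    rw [hd, List.getElem?_append, if_pos (by simp), List.getElem?_replicate, if_pos (by omega)]
  have h1 : w[1]? = some a := by
    rw [hd, List.getElem?_append, if_pos (by simp only [List.length_replicate, List.length_append, List.length_nil, List.length_cons]; omega), List.getElem?_replicate,
      if_pos (by omega)]
  exact hb.2.1 (by rw [h0, h1])

lemma bridge_rle2 {w : List α} (hb : IsBridge w) (h2 : rleSize w = 2) :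
    ∃ a b : α, a ≠ b ∧ w = [a, b] := by
  have hwne : w ≠ [] := by rintro rfl; simp [rleSize_nil] at h2
  obtain ⟨a, k, t, hd, hh⟩ := run_decomp hwne
  have hk0 : k = 0 := bridge_first_run hb hd
  subst hk0
  rw [hd, rleSize_run_cons hh] at h2
  have htne : t ≠ [] := by
    intro hnil; rw [hnil] at h2; simp [rleSize_nil] at h2
  obtain ⟨b, k', t', hd', hh'⟩ := run_decomp htne
  have ht' : rleSize t = rleSize t' + 1 := by rw [hd']; exact rleSize_run_cons hh'
  have ht'0 : t' = [] := by
    apply rleSize_eq_zero; omega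
  subst ht'0
  have hab : a ≠ b := by
    intro hh2
    apply hh
    rw [hd']
    simp [List.replicate_succ, hh2]
  have hk'0 : k' = 0 := by
    by_contra hk'
    -- last two both b
    rw [hd, hd'] at hb
    have hlen : (List.replicate (0+1) a ++ (List.replicate (k'+1) b ++ [])).length = k' + 2 := by
      simp
    have hL1 : (List.replicate (0+1) a ++ (List.replicate (k'+1) b ++ []))[k'+1]? = some b := by
      rw [List.getElem?_append, if_neg (by simp)]
      simp only [List.length_replicate]
      rw [List.append_nil, List.getElem?_replicate, if_pos (by omega)]
    have hL2 : (List.replicate (0+1) a ++ (List.replicate (k'+1) b ++ []))[k']? = some b := by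
      rw [List.getElem?_append, if_neg (by simp only [List.length_replicate, List.length_append, List.length_nil, List.length_cons]; omega)]
      simp only [List.length_replicate]
      rw [List.append_nil, List.getElem?_replicate, if_pos (by omega)]
    have := hb.2.2
    rw [hlen] at this
    have he1 : k' + 2 - 2 = k' := by omega
    have he2 : k' + 2 - 1 = k' + 1 := by omega
    rw [he1, he2, hL1, hL2] at this
    exact this rfl
  subst hk'0
  exact ⟨a, b, hab, by rw [hd, hd']; simp⟩

lemma bridge_rle3 {w : List α} (hb : IsBridge w) (h3 : rleSize w = 3) :
    ∃ (a b c : α) (k : ℕ), a ≠ b ∧ b ≠ c ∧ w = a :: (List.replicate (k+1) b ++ [c]) := by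
  have hwne : w ≠ [] := by rintro rfl; simp [rleSize_nil] at h3
  obtain ⟨a, k, t, hd, hh⟩ := run_decomp hwne
  have hk0 : k = 0 := bridge_first_run hb hd
  subst hk0
  rw [hd, rleSize_run_cons hh] at h3
  have htne : t ≠ [] := by
    intro hnil; rw [hnil] at h3; simp [rleSize_nil] at h3
  obtain ⟨b, k', t', hd', hh'⟩ := run_decomp htne
  have ht' : rleSize t = rleSize t' + 1 := by rw [hd']; exact rleSize_run_cons hh'
  have ht'ne : t' ≠ [] := by
    intro hnil; rw [hnil] at ht'; simp [rleSize_nil] at ht'; omega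
  obtain ⟨c, k'', t'', hd'', hh''⟩ := run_decomp ht'ne
  have ht'' : rleSize t' = rleSize t'' + 1 := by rw [hd'']; exact rleSize_run_cons hh''
  have ht''0 : t'' = [] := by apply rleSize_eq_zero; omega
  subst ht''0
  have hab : a ≠ b := by
    intro hh2
    apply hh
    rw [hd']
    simp [List.replicate_succ, hh2]
  have hbc : b ≠ c := by
    intro hh2
    apply hh'
    rw [hd'']
    simp [List.replicate_succ, hh2]
  have hk''0 : k'' = 0 := by
    by_contra hk''
    rw [hd, hd', hd''] at hb
    set W := List.replicate (0+1) a ++ (List.replicate (k'+1) b ++ (List.replicate (k''+1) c ++ []))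
      with hW
    have hlen : W.length = k' + k'' + 3 := by rw [hW]; simp only [List.length_replicate, List.length_append, List.length_nil]; omega
    have hL1 : W[k' + k'' + 2]? = some c := by
      rw [hW, List.getElem?_append, if_neg (by simp only [List.length_replicate, List.length_append, List.length_nil, List.length_cons]; omega)]
      simp only [List.length_replicate]
      rw [List.getElem?_append, if_neg (by simp only [List.length_replicate, List.length_append, List.length_nil, List.length_cons]; omega)]
      simp only [List.length_replicate]
      rw [List.append_nil, List.getElem?_replicate, if_pos (by omega)]
    have hL2 : W[k' + k'' + 1]? = some c := by
      rw [hW, List.getElem?_append, if_neg (by simp only [List.length_replicate, List.length_append, List.length_nil, List.length_cons]; omega)]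
      simp only [List.length_replicate]
      rw [List.getElem?_append, if_neg (by simp only [List.length_replicate, List.length_append, List.length_nil, List.length_cons]; omega)]
      simp only [List.length_replicate]
      rw [List.append_nil, List.getElem?_replicate, if_pos (by omega)]
    have := hb.2.2
    rw [hlen] at this
    have he1 : k' + k'' + 3 - 2 = k' + k'' + 1 := by omega
    have he2 : k' + k'' + 3 - 1 = k' + k'' + 2 := by omega
    rw [he1, he2, hL1, hL2] at this
    exact this rfl
  subst hk''0
  refine ⟨a, b, c, k', hab, hbc, ?_⟩
  rw [hd, hd', hd'']
  simp

end Aux6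

section Aux7
set_option linter.unusedSectionVars false
open List
variable {α : Type*} [DecidableEq α]

lemma bridge_rleSize_ge2 {w : List α} (hb : IsBridge w) : 2 ≤ rleSize w := by
  obtain ⟨c, t, rfl, htne, hth⟩ := bridge_destruct hb
  rw [rleSize_cons_ne hth]
  have := rleSize_pos htne
  omega

lemma roots2_sum (T : List α) :
    ∑ ρ ∈ T.sublists.toFinset.filter
        (fun w => w <:+: T ∧ IsBridge w ∧ rleSize w = 2), (occFin T ρ).card
      ≤ (bdFin T).card := by
  classical
  rw [← Finset.card_sigma]
  apply Finset.card_le_card_of_injOn (fun p => p.2)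
  · rintro ⟨ρ, i⟩ hp
    rw [Finset.mem_coe, Finset.mem_sigma] at hp
    obtain ⟨hρ, hi⟩ := hp
    dsimp only at hρ hi ⊢
    rw [Finset.mem_filter] at hρ
    obtain ⟨-, hρT, hρb, hρ2⟩ := hρ
    obtain ⟨a, b, hab, rfl⟩ := bridge_rle2 hρb hρ2
    have hlen := (mem_occFin.mp hi).1
    simp only [List.length_cons, List.length_nil] at hlen
    have h0 : T[i+0]? = some a := by
      have := occ_get hi (show 0 < ([a,b] : List α).length by simp)
      simpa using this
    have h1 : T[i+1]? = some b := by
      have := occ_get hi (show 1 < ([a,b] : List α).length by simp)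
      simpa using this
    rw [Finset.mem_coe, mem_bdFin]
    constructor
    · omega
    · simp only [Nat.add_zero] at h0
      rw [h0, h1]
      simp [hab]
  · rintro ⟨ρ₁, i₁⟩ hp₁ ⟨ρ₂, i₂⟩ hp₂ heq
    simp only [Finset.coe_sigma, Set.mem_sigma_iff] at hp₁ hp₂
    obtain ⟨hρ₁, hi₁⟩ := hp₁
    obtain ⟨hρ₂, hi₂⟩ := hp₂
    dsimp only at hρ₁ hρ₂ hi₁ hi₂ heq
    rw [Finset.mem_coe, Finset.mem_filter] at hρ₁ hρ₂
    obtain ⟨-, -, hb₁, h2₁⟩ := hρ₁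
    obtain ⟨-, -, hb₂, h2₂⟩ := hρ₂
    obtain ⟨a₁, b₁, hab₁, he₁⟩ := bridge_rle2 hb₁ h2₁
    obtain ⟨a₂, b₂, hab₂, he₂⟩ := bridge_rle2 hb₂ h2₂
    rw [Finset.mem_coe] at hi₁ hi₂
    subst heq
    subst he₁; subst he₂
    have g₁0 : T[i₁+0]? = some a₁ := by
      have := occ_get hi₁ (show 0 < ([a₁,b₁] : List α).length by simp); simpa using this
    have g₁1 : T[i₁+1]? = some b₁ := by
      have := occ_get hi₁ (show 1 < ([a₁,b₁] : List α).length by simp); simpa using this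
    have g₂0 : T[i₁+0]? = some a₂ := by
      have := occ_get hi₂ (show 0 < ([a₂,b₂] : List α).length by simp); simpa using this
    have g₂1 : T[i₁+1]? = some b₂ := by
      have := occ_get hi₂ (show 1 < ([a₂,b₂] : List α).length by simp); simpa using this
    have haa : a₁ = a₂ := by rw [g₁0] at g₂0; simpa using g₂0
    have hbb : b₁ = b₂ := by rw [g₁1] at g₂1; simpa using g₂1
    subst haa; subst hbb
    rfl

lemma rho3_get (a b c : α) (k : ℕ) :
    (a :: (List.replicate (k+1) b ++ [c]))[0]? = some a
    ∧ (∀ t, t < k+1 → (a :: (List.replicate (k+1) b ++ [c]))[t+1]? = some b)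
    ∧ (a :: (List.replicate (k+1) b ++ [c]))[k+2]? = some c
    ∧ (a :: (List.replicate (k+1) b ++ [c])).length = k + 3 := by
  refine ⟨by simp, ?_, ?_, by simp⟩
  · intro t ht
    rw [List.getElem?_cons_succ, List.getElem?_append, if_pos (by simpa using ht),
      List.getElem?_replicate, if_pos ht]
  · have h1 : k + 2 = (k+1) + 1 := by omega
    rw [h1, List.getElem?_cons_succ, List.getElem?_append,
      if_neg (by simp), List.length_replicate]
    simp

lemma roots3_sum (T : List α) :
    ∑ ρ ∈ T.sublists.toFinset.filter
        (fun w => w <:+: T ∧ IsBridge w ∧ rleSize w = 3), (occFin T ρ).card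
      ≤ (bdFin T).card - 1 := by
  classical
  rw [← Finset.card_sigma]
  set S := (T.sublists.toFinset.filter
      (fun w => w <:+: T ∧ IsBridge w ∧ rleSize w = 3)).sigma (fun ρ => occFin T ρ) with hS
  have hkey : ∀ (ρ : List α) (i : ℕ), (⟨ρ, i⟩ : (_ : List α) × ℕ) ∈ S →
      ∃ (a b c : α) (k : ℕ), a ≠ b ∧ b ≠ c ∧ ρ = a :: (List.replicate (k+1) b ++ [c]) ∧
        T[i+0]? = some a ∧ (∀ t, t < k+1 → T[i+(t+1)]? = some b) ∧ T[i+(k+2)]? = some c ∧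
        i + (k+3) ≤ T.length := by
    intro ρ i hp
    rw [hS, Finset.mem_sigma] at hp
    obtain ⟨hρ, hi⟩ := hp
    dsimp only at hρ hi
    rw [Finset.mem_filter] at hρ
    obtain ⟨-, hρT, hρb, hρ3⟩ := hρ
    obtain ⟨a, b, c, k, hab, hbc, rfl⟩ := bridge_rle3 hρb hρ3
    obtain ⟨r0, rmid, rlast, rlen⟩ := rho3_get a b c k
    have hlen := (mem_occFin.mp hi).1
    rw [rlen] at hlen
    refine ⟨a, b, c, k, hab, hbc, rfl, ?_, ?_, ?_, hlen⟩
    · rw [occ_get hi (by rw [rlen]; omega), r0]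
    · intro t ht
      rw [occ_get hi (by rw [rlen]; omega), rmid t ht]
    · rw [occ_get hi (by rw [rlen]; omega), rlast]
  have hmem_bd : ∀ (ρ : List α) (i : ℕ), (⟨ρ, i⟩ : (_ : List α) × ℕ) ∈ S →
      i ∈ bdFin T ∧ (∃ j', j' ∈ bdFin T ∧ i < j') := by
    intro ρ i hp
    obtain ⟨a, b, c, k, hab, hbc, -, h0, hmid, hlast, hlen⟩ := hkey ρ i hp
    constructor
    · rw [mem_bdFin]
      refine ⟨by omega, ?_⟩
      simp only [Nat.add_zero] at h0
      have h1 : T[i+1]? = some b := by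
        have := hmid 0 (by omega); simpa using this
      rw [h0, h1]
      simp [hab]
    · refine ⟨i + (k+1), ?_, by omega⟩
      rw [mem_bdFin]
      refine ⟨by omega, ?_⟩
      have h1 : T[i+(k+1)]? = some b := hmid k (by omega)
      have h2 : T[i+(k+1)+1]? = some c := by
        have := hlast
        rw [show i+(k+2) = i+(k+1)+1 by omega] at this
        exact this
      rw [h1, h2]
      simp [hbc]
  rcases Finset.eq_empty_or_nonempty S with he | hne
  · rw [he]; simp
  · obtain ⟨⟨ρ₀, i₀⟩, hp₀⟩ := hne
    have hBne : (bdFin T).Nonempty := ⟨i₀, (hmem_bd ρ₀ i₀ hp₀).1⟩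
    set M := (bdFin T).max' hBne with hM
    have hcard : ((bdFin T).erase M).card = (bdFin T).card - 1 :=
      Finset.card_erase_of_mem ((bdFin T).max'_mem hBne)
    rw [← hcard]
    apply Finset.card_le_card_of_injOn (fun p => p.2)
    · rintro ⟨ρ, i⟩ hp
      obtain ⟨hin, j', hj', hij⟩ := hmem_bd ρ i hp
      dsimp only
      rw [Finset.mem_coe, Finset.mem_erase]
      refine ⟨?_, hin⟩
      intro hiM
      have := Finset.le_max' (bdFin T) j' hj'
      rw [← hM] at this
      omega
    · rintro ⟨ρ₁, i₁⟩ hp₁ ⟨ρ₂, i₂⟩ hp₂ heq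
      rw [Finset.mem_coe] at hp₁ hp₂
      dsimp only at heq
      subst heq
      obtain ⟨a₁, b₁, c₁, k₁, hab₁, hbc₁, he₁, h0₁, hmid₁, hlast₁, hlen₁⟩ := hkey ρ₁ i₁ hp₁
      obtain ⟨a₂, b₂, c₂, k₂, hab₂, hbc₂, he₂, h0₂, hmid₂, hlast₂, hlen₂⟩ := hkey ρ₂ i₁ hp₂
      have haa : a₁ = a₂ := by rw [h0₁] at h0₂; simpa using h0₂
      have hbb : b₁ = b₂ := by
        have g1 : T[i₁+1]? = some b₁ := by have := hmid₁ 0 (by omega); simpa using this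
        have g2 : T[i₁+1]? = some b₂ := by have := hmid₂ 0 (by omega); simpa using this
        rw [g1] at g2; simpa using g2
      have hkk : k₁ = k₂ := by
        by_contra hne'
        rcases Nat.lt_or_ge k₁ k₂ with hlt | hge
        · have g1 : T[i₁+(k₁+2)]? = some c₁ := hlast₁
          have g2 : T[i₁+(k₁+2)]? = some b₂ := by
            have := hmid₂ (k₁+1) (by omega)
            rwa [show i₁+(k₁+1+1) = i₁+(k₁+2) by omega] at this
          rw [g1] at g2
          rw [hbb] at hbc₁
          exact hbc₁ (by simpa using g2.symm)
        · have hlt : k₂ < k₁ := by omega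
          have g1 : T[i₁+(k₂+2)]? = some c₂ := hlast₂
          have g2 : T[i₁+(k₂+2)]? = some b₁ := by
            have := hmid₁ (k₂+1) (by omega)
            rwa [show i₁+(k₂+1+1) = i₁+(k₂+2) by omega] at this
          rw [g1] at g2
          rw [← hbb] at hbc₂
          exact hbc₂ (by simpa using g2.symm)
      subst hkk
      have hcc : c₁ = c₂ := by rw [hlast₁] at hlast₂; simpa using hlast₂
      have : ρ₁ = ρ₂ := by rw [he₁, he₂, haa, hbb, hcc]
      subst this
      rfl

lemma root_exists_aux {T : List α} :
    ∀ n (w : List α), w.length ≤ n → IsBridge w → w <:+: T →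
      ∃ (ρ : List α) (t : ℕ), ρ <:+: T ∧ IsBridge ρ ∧ (rleSize ρ = 2 ∨ rleSize ρ = 3) ∧
        t + ρ.length ≤ w.length ∧ bridgeReduce^[t] w = ρ := by
  intro n
  induction n with
  | zero =>
    intro w hw hb _
    have := hb.1
    omega
  | succ n ih =>
    intro w hw hb hin
    have hrle := bridge_rleSize_ge2 hb
    by_cases hsm : rleSize w = 2 ∨ rleSize w = 3
    · exact ⟨w, 0, hin, hb, hsm, by omega, rfl⟩
    · have h4 : 4 ≤ rleSize w := by omega
      set v := bridgeReduce w with hv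
      have hrv : rleSize v + 2 = rleSize w := rleSize_bridgeReduce (by omega)
      have hvne : v ≠ [] := by
        intro hnil
        rw [hnil, rleSize_nil] at hrv
        omega
      have hv2 : 2 ≤ v.length := by
        have := rleSize_le_length v
        omega
      have hvb : IsBridge v := by
        obtain ⟨-, -, -, -, -, -, -, -, -, -, -, hbr⟩ := master hb (hv.symm) hv2
        exact hbr
      have hvin : v <:+: T := (bridgeReduce_infix w).trans hin
      have hvlt : v.length < w.length := bridgeReduce_length_lt hvne
      obtain ⟨ρ, t, h1, h2, h3, h4', h5⟩ := ih v (by omega) hvb hvin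
      refine ⟨ρ, t + 1, h1, h2, h3, by omega, ?_⟩
      rw [Function.iterate_succ_apply]
      rw [← hv]
      exact h5

lemma root_exists {T w : List α} (hb : IsBridge w) (hin : w <:+: T) :
    ∃ ρ, ρ ∈ T.sublists.toFinset.filter
        (fun z => z <:+: T ∧ IsBridge z ∧ (rleSize z = 2 ∨ rleSize z = 3))
      ∧ w ∈ DescF T ρ := by
  obtain ⟨ρ, t, h1, h2, h3, h4, h5⟩ := root_exists_aux w.length w le_rfl hb hin
  have hwT : w.length ≤ T.length := hin.length_le
  refine ⟨ρ, ?_, ?_⟩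
  · rw [Finset.mem_filter]
    exact ⟨by rw [List.mem_toFinset, List.mem_sublists]; exact h1.sublist, h1, h2, h3⟩
  · rw [mem_DescF]
    exact ⟨hin, hb, t, by omega, h5⟩

end Aux7

theorem stmt8 {α : Type*} [DecidableEq α] (T : List α) :
    ∑ w ∈ T.sublists.toFinset.filter (fun w => IsBridge w ∧
        ((w <:+: T ∧ (rleSize w = 2 ∨ rleSize w = 3)) ∨ 2 ≤ (KFin T w).card)),
      (KFin T w).card ≤ 2 * (2 * rleSize T - 3) := by
  classical
  rcases eq_or_ne T [] with rfl | hTne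
  · have hempty : (List.sublists ([] : List α)).toFinset.filter (fun w => IsBridge w ∧
        ((w <:+: ([] : List α) ∧ (rleSize w = 2 ∨ rleSize w = 3)) ∨ 2 ≤ (KFin ([] : List α) w).card)) = ∅ := by
      rw [Finset.eq_empty_iff_forall_notMem]
      intro w hw
      rw [Finset.mem_filter, List.mem_toFinset, List.mem_sublists] at hw
      have hwnil : w = [] := List.sublist_nil.mp hw.1
      rw [hwnil] at hw
      have := hw.2.1.1
      simp at this
    rw [hempty]
    simp
  · set P : List α → Prop := fun w => w <:+: T ∧ (rleSize w = 2 ∨ rleSize w = 3) with hP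
    set Fs := T.sublists.toFinset.filter (fun w => IsBridge w ∧
        ((w <:+: T ∧ (rleSize w = 2 ∨ rleSize w = 3)) ∨ 2 ≤ (KFin T w).card)) with hFs
    set Roots := T.sublists.toFinset.filter
        (fun z => z <:+: T ∧ IsBridge z ∧ (rleSize z = 2 ∨ rleSize z = 3)) with hRoots
    rw [← Finset.sum_filter_add_sum_filter_not Fs P (fun w => (KFin T w).card)]
    have hpart1 : ∑ w ∈ Fs.filter (fun w => P w), (KFin T w).card ≤ ∑ ρ ∈ Roots, (KFin T ρ).card := by
      apply Finset.sum_le_sum_of_subset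
      intro w hw
      rw [Finset.mem_filter] at hw
      have h1 := hw.1
      rw [hFs, Finset.mem_filter] at h1
      rw [hRoots, Finset.mem_filter]
      exact ⟨h1.1, hw.2.1, h1.2.1, hw.2.2⟩
    have hpart2 : ∑ w ∈ Fs.filter (fun w => ¬ P w), (KFin T w).card
        ≤ ∑ ρ ∈ Roots, hF T ρ := by
      have hsub : Fs.filter (fun w => ¬ P w) ⊆ Roots.biUnion
          (fun ρ => (DescF T ρ).filter (fun u => 2 ≤ (KFin T u).card)) := by
        intro w hw
        rw [Finset.mem_filter] at hw
        obtain ⟨hwF, hnP⟩ := hw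
        rw [hFs, Finset.mem_filter] at hwF
        obtain ⟨hwmem, hwb, hdisj⟩ := hwF
        have hK2 : 2 ≤ (KFin T w).card := by
          rcases hdisj with h | h
          · exact absurd h hnP
          · exact h
        have hwT : w <:+: T := by
          have hpos : 0 < (KFin T w).card := by omega
          obtain ⟨z, hz⟩ := Finset.card_pos.mp hpos
          obtain ⟨hzT, hzb, hzred⟩ := mem_KFin.mp hz
          rw [← hzred]
          exact (bridgeReduce_infix z).trans hzT
        obtain ⟨ρ, hρ, hwD⟩ := root_exists hwb hwT
        rw [Finset.mem_biUnion]
        refine ⟨ρ, by rw [hRoots]; exact hρ, ?_⟩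
        rw [Finset.mem_filter]
        exact ⟨hwD, hK2⟩
      calc ∑ w ∈ Fs.filter (fun w => ¬ P w), (KFin T w).card
          ≤ ∑ w ∈ Roots.biUnion
              (fun ρ => (DescF T ρ).filter (fun u => 2 ≤ (KFin T u).card)),
              (KFin T w).card := Finset.sum_le_sum_of_subset hsub
        _ ≤ ∑ ρ ∈ Roots, ∑ w ∈ (DescF T ρ).filter (fun u => 2 ≤ (KFin T u).card),
              (KFin T w).card := my_sum_biUnion_le ..
        _ = ∑ ρ ∈ Roots, hF T ρ := rfl
    have hroot : ∀ ρ ∈ Roots, (KFin T ρ).card + hF T ρ ≤ 2 * (occFin T ρ).card := by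
      intro ρ hρ
      rw [hRoots, Finset.mem_filter] at hρ
      exact root_bound hρ.2.2.1 hρ.2.1
    have hcombine : (∑ ρ ∈ Roots, (KFin T ρ).card) + (∑ ρ ∈ Roots, hF T ρ)
        ≤ 2 * ∑ ρ ∈ Roots, (occFin T ρ).card := by
      rw [Finset.mul_sum, ← Finset.sum_add_distrib]
      exact Finset.sum_le_sum hroot
    have hsplit : ∑ ρ ∈ Roots, (occFin T ρ).card
        = (∑ ρ ∈ Roots.filter (fun ρ => rleSize ρ = 2), (occFin T ρ).card)
        + ∑ ρ ∈ Roots.filter (fun ρ => ¬ rleSize ρ = 2), (occFin T ρ).card :=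
      (Finset.sum_filter_add_sum_filter_not Roots _ _).symm
    have hocc2 : ∑ ρ ∈ Roots.filter (fun ρ => rleSize ρ = 2), (occFin T ρ).card
        ≤ (bdFin T).card := by
      refine le_trans (Finset.sum_le_sum_of_subset ?_) (roots2_sum T)
      intro ρ h
      rw [Finset.mem_filter] at h
      have h1 := h.1
      rw [hRoots, Finset.mem_filter] at h1
      rw [Finset.mem_filter]
      exact ⟨h1.1, h1.2.1, h1.2.2.1, h.2⟩
    have hocc3 : ∑ ρ ∈ Roots.filter (fun ρ => ¬ rleSize ρ = 2), (occFin T ρ).card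
        ≤ (bdFin T).card - 1 := by
      refine le_trans (Finset.sum_le_sum_of_subset ?_) (roots3_sum T)
      intro ρ h
      rw [Finset.mem_filter] at h
      have h1 := h.1
      rw [hRoots, Finset.mem_filter] at h1
      rw [Finset.mem_filter]
      refine ⟨h1.1, h1.2.1, h1.2.2.1, ?_⟩
      rcases h1.2.2.2 with h2 | h3
      · exact absurd h2 h.2
      · exact h3
    have hbd : (bdFin T).card + 1 = rleSize T := bdFin_card T hTne
    omega
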